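/- arXiv:2102.04586 — 2 statements merged into one kernel-verified Lean document; each statement's English description precedes it below -/
import Mathlib

section
/- Let q ≥ 1 and let w ∈ ℝ^q be the vector with entries wᵢ = 2^{i−1}. For every real positive semidefinite q×q matrix B with unit diagonal, one has wᵀBw ≥ 1. -/
open Matrix

theorem stmt_4 {q : ℕ} (hq : 1 ≤ q) (w : Fin q → ℝ)
    (hw : ∀ i, w i = 2 ^ (i : ℕ))
    (B : Matrix (Fin q) (Fin q) ℝ)
    (hB : B.PosSemidef) (hdiag : ∀ i, B i i = 1) :
    1 ≤ w ⬝ᵥ B.mulVec w := by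
  obtain ⟨A, rfl⟩ : ∃ A : Matrix (Fin q) (Fin q) ℝ, B = Aᴴ * A := by
    open scoped MatrixOrder in
    obtain ⟨A, hA⟩ := CStarAlgebra.nonneg_iff_eq_star_mul_self.mp hB.nonneg
    exact ⟨A, hA⟩
  -- rewrite quadratic form as ‖A *ᵥ w‖²
  set v : EuclideanSpace ℝ (Fin q) := WithLp.toLp 2 (A *ᵥ w) with hv
  have hquad : w ⬝ᵥ (Aᴴ * A).mulVec w = v ⬝ᵥ v := by
    rw [← Matrix.mulVec_mulVec, Matrix.dotProduct_mulVec, Matrix.vecMul_conjTranspose]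
    simp [hv]
  rw [hquad]
  have hvv : v ⬝ᵥ v = ‖v‖ ^ 2 := by
    rw [← real_inner_self_eq_norm_sq]
    rw [EuclideanSpace.inner_eq_star_dotProduct]
    simp [dotProduct, PiLp.inner_apply, mul_comm]
  rw [hvv]
  -- columns of A
  set f : Fin q → EuclideanSpace ℝ (Fin q) := fun i => WithLp.toLp 2 (fun k => w i * A k i) with hf
  have hnormf : ∀ i, ‖f i‖ = w i := by
    intro i
    have hcol : ∑ k, A k i ^ 2 = 1 := by
      have := hdiag i
      simp only [Matrix.mul_apply, Matrix.conjTranspose_apply, star_trivial] at this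
      simpa [sq] using this
    have : ‖f i‖ = Real.sqrt (∑ k, (w i * A k i) ^ 2) := by
      rw [EuclideanSpace.norm_eq]
      simp only [hf, Real.rpow_two]
      congr 1
      apply Finset.sum_congr rfl
      intro k _
      rw [Real.norm_eq_abs, sq_abs]
    rw [this]
    have : ∑ k, (w i * A k i) ^ 2 = w i ^ 2 := by
      simp_rw [mul_pow]
      rw [← Finset.mul_sum, hcol, mul_one]
    rw [this, Real.sqrt_sq (by rw [hw]; positivity)]
  have hvsum : v = ∑ i, f i := by
    ext k
    rw [WithLp.ofLp_sum, Finset.sum_apply]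
    simp [hv, hf, Matrix.mulVec, dotProduct, mul_comm]
  -- top index
  have hq0 : q - 1 < q := Nat.sub_lt hq one_pos
  set n : Fin q := ⟨q - 1, hq0⟩ with hn
  have hwsum : ∑ i : Fin q, w i = 2 ^ q - 1 := by
    simp_rw [hw]
    rw [Fin.sum_univ_eq_sum_range (fun i => (2:ℝ) ^ i)]
    rw [geom_sum_eq (by norm_num)]
    norm_num
  have hwn : w n = 2 ^ (q - 1) := by rw [hw]
  have hrest : ∑ i ∈ Finset.univ.erase n, w i = 2 ^ (q - 1) - 1 := by
    have := Finset.sum_erase_add Finset.univ w (Finset.mem_univ n)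
    have h2 : (2:ℝ) ^ q = 2 ^ (q - 1) * 2 := by
      rw [← pow_succ]
      congr 1
      omega
    rw [hwsum, hwn] at this
    linarith
  -- triangle inequality
  have hsplit : f n = v - ∑ i ∈ Finset.univ.erase n, f i := by
    rw [hvsum, ← Finset.sum_erase_add Finset.univ f (Finset.mem_univ n)]
    abel
  have hnr : ‖∑ i ∈ Finset.univ.erase n, f i‖ ≤ 2 ^ (q - 1) - 1 := by
    calc ‖∑ i ∈ Finset.univ.erase n, f i‖ ≤ ∑ i ∈ Finset.univ.erase n, ‖f i‖ :=
          norm_sum_le _ _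
      _ = 2 ^ (q - 1) - 1 := by simp_rw [hnormf]; exact hrest
  have hfn : ‖f n‖ = 2 ^ (q - 1) := by rw [hnormf, hwn]
  have hnv : (1:ℝ) ≤ ‖v‖ := by
    have := norm_sub_le v (∑ i ∈ Finset.univ.erase n, f i)
    rw [← hsplit, hfn] at this
    linarith
  calc (1:ℝ) = 1 ^ 2 := by norm_num
    _ ≤ ‖v‖ ^ 2 := by apply pow_le_pow_left₀ (by norm_num) hnv
end

section
/- Let q ≥ 1 and w ∈ ℝ^q with wᵢ = 2^{i−1}. The set { wᵀBw : B ∈ ℝ^{q×q} positive semidefinite with unit diagonal } equals the closed interval [1, (2^q − 1)²]. -/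
open Matrix Finset

lemma dot_vecMulVec {n : Type*} [Fintype n] (v w : n → ℝ) :
    w ⬝ᵥ (vecMulVec v v) *ᵥ w = (v ⬝ᵥ w) ^ 2 := by
  simp [dotProduct, mulVec, vecMulVec_apply, Finset.mul_sum, Finset.sum_mul, mul_assoc, sq]
  rw [Finset.sum_comm]
  congr 1; ext i; congr 1; ext j; ring

lemma psd_vecMulVec {n : Type*} [Fintype n] (v : n → ℝ) : (vecMulVec v v).PosSemidef := by
  refine posSemidef_iff_dotProduct_mulVec.mpr ⟨?_, ?_⟩
  · ext i j; simp [vecMulVec_apply, conjTranspose_apply, mul_comm]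
  · intro x
    have h := dot_vecMulVec v x
    simp only [star_trivial]
    rw [h]
    positivity

lemma psd_smul {n : Type*} [Fintype n] {M : Matrix n n ℝ} (h : M.PosSemidef) {c : ℝ}
    (hc : 0 ≤ c) : (c • M).PosSemidef := by
  refine posSemidef_iff_dotProduct_mulVec.mpr ⟨?_, fun x => ?_⟩
  · ext i j
    have := congrFun (congrFun h.1 i) j
    simp only [conjTranspose_apply, Matrix.smul_apply, smul_eq_mul, star_trivial] at this ⊢
    rw [this]
  · rw [smul_mulVec, dotProduct_smul, smul_eq_mul]
    exact mul_nonneg hc ((posSemidef_iff_dotProduct_mulVec.mp h).2 x)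

lemma sum_pow_two (q : ℕ) : ∑ i : Fin q, (2:ℝ) ^ (i:ℕ) = 2 ^ q - 1 := by
  rw [Fin.sum_univ_eq_sum_range]
  have := geom_sum_eq (by norm_num : (2:ℝ) ≠ 1) q
  rw [this]
  norm_num

theorem stmt_5 {q : ℕ} (hq : 1 ≤ q) (w : Fin q → ℝ)
    (hw : ∀ i, w i = 2 ^ (i : ℕ)) :
    {x : ℝ | ∃ B : Matrix (Fin q) (Fin q) ℝ,
        B.PosSemidef ∧ (∀ i, B i i = 1) ∧ x = w ⬝ᵥ B.mulVec w} =
      Set.Icc 1 ((2 ^ q - 1) ^ 2) := by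
  have hsum : ∑ i : Fin q, w i = 2 ^ q - 1 := by
    simp only [hw]; exact sum_pow_two q
  set L : Fin q := ⟨q - 1, by omega⟩ with hL
  have hwL : w L = 2 ^ (q - 1) := by rw [hw]
  have hpow : (2:ℝ) * 2 ^ (q-1) = 2 ^ q := by
    rw [← pow_succ']; congr 1; omega
  have hwnn : ∀ i, 0 ≤ w i := fun i => by rw [hw]; positivity
  ext x
  simp only [Set.mem_setOf_eq, Set.mem_Icc]
  constructor
  · rintro ⟨B, hB, hdiag, rfl⟩
    obtain ⟨A, rfl⟩ : ∃ A : Matrix (Fin q) (Fin q) ℝ, B = Aᴴ * A := by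
      open scoped MatrixOrder Matrix.Norms.L2Operator in
      exact CStarAlgebra.nonneg_iff_eq_star_mul_self.mp hB.nonneg
    set F : Fin q → EuclideanSpace ℝ (Fin q) := fun i => WithLp.toLp 2 (fun k => A k i) with hF
    have hinner : ∀ i j, (inner ℝ (F i) (F j) : ℝ) = (Aᴴ * A) i j := by
      intro i j
      simp [EuclideanSpace.inner_eq_star_dotProduct, dotProduct, Matrix.mul_apply,
        conjTranspose_apply, hF, mul_comm]
    have hFnorm : ∀ i, ‖F i‖ = 1 := by
      intro i
      have h1 : ‖F i‖ ^ 2 = 1 := by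
        rw [← real_inner_self_eq_norm_sq, hinner, hdiag]
      nlinarith [norm_nonneg (F i)]
    have key : w ⬝ᵥ (Aᴴ * A) *ᵥ w = ‖∑ i, w i • F i‖ ^ 2 := by
      rw [← real_inner_self_eq_norm_sq, sum_inner]
      simp only [inner_sum, real_inner_smul_left, real_inner_smul_right, hinner]
      simp only [dotProduct, mulVec, Finset.mul_sum]
      congr 1; ext i; congr 1; ext j; ring
    set S := ∑ i, w i • F i with hS
    -- upper bound on ‖S‖
    have hub : ‖S‖ ≤ 2 ^ q - 1 := by
      calc ‖S‖ ≤ ∑ i, ‖w i • F i‖ := norm_sum_le _ _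
        _ = ∑ i, w i := by
            apply Finset.sum_congr rfl; intro i _
            rw [norm_smul, hFnorm, Real.norm_eq_abs, abs_of_nonneg (hwnn i), mul_one]
        _ = 2 ^ q - 1 := hsum
    -- lower bound on ‖S‖
    have hsplit : S = (∑ i ∈ univ.erase L, w i • F i) + w L • F L := by
      rw [hS, Finset.sum_erase_add]
      exact Finset.mem_univ L
    have hrest : ‖∑ i ∈ univ.erase L, w i • F i‖ ≤ 2 ^ (q-1) - 1 := by
      calc ‖∑ i ∈ univ.erase L, w i • F i‖ ≤ ∑ i ∈ univ.erase L, ‖w i • F i‖ :=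
            norm_sum_le _ _
        _ = ∑ i ∈ univ.erase L, w i := by
            apply Finset.sum_congr rfl; intro i _
            rw [norm_smul, hFnorm, Real.norm_eq_abs, abs_of_nonneg (hwnn i), mul_one]
        _ = (∑ i, w i) - w L := by
            rw [← Finset.sum_erase_add univ w (Finset.mem_univ L)]; ring
        _ = 2 ^ (q-1) - 1 := by rw [hsum, hwL]; linarith
    have hlb : 1 ≤ ‖S‖ := by
      have h1 : ‖w L • F L‖ = 2 ^ (q-1) := by
        rw [norm_smul, hFnorm, Real.norm_eq_abs, abs_of_nonneg (hwnn L), mul_one, hwL]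
      have h2 : ‖w L • F L‖ ≤ ‖S‖ + ‖∑ i ∈ univ.erase L, w i • F i‖ := by
        calc ‖w L • F L‖ = ‖S - ∑ i ∈ univ.erase L, w i • F i‖ := by
              rw [hsplit]; congr 1; abel
          _ ≤ ‖S‖ + ‖∑ i ∈ univ.erase L, w i • F i‖ := norm_sub_le _ _
      rw [h1] at h2
      linarith
    rw [key]
    constructor
    · nlinarith
    · have h0 : (0:ℝ) ≤ ‖S‖ := norm_nonneg _
      nlinarith
  · rintro ⟨hx1, hx2⟩
    set M : ℝ := (2 ^ q - 1) ^ 2 with hM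
    set t : ℝ := (x - 1) / (M - 1) with ht
    have hM1 : 1 ≤ M := by
      have : (1:ℝ) ≤ 2 ^ q - 1 := by
        have : (2:ℝ) ≤ 2 ^ q := by
          calc (2:ℝ) = 2 ^ 1 := (pow_one 2).symm
            _ ≤ 2 ^ q := by apply pow_le_pow_right₀ (by norm_num) hq
        linarith
      nlinarith
    have ht0 : 0 ≤ t := div_nonneg (by linarith) (by linarith)
    have ht1 : t ≤ 1 := by
      rcases eq_or_lt_of_le hM1 with h | h
      · rw [ht, ← h]; simp
      · rw [ht, div_le_one (by linarith)]; linarith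
    have htM : t * (M - 1) = x - 1 := by
      rcases eq_or_lt_of_le hM1 with h | h
      · have hx : x = 1 := by rw [← h] at hx2; linarith
        rw [ht, ← h, hx]; ring
      · rw [ht, div_mul_cancel₀]; linarith
    set o : Fin q → ℝ := fun _ => 1 with ho
    set u : Fin q → ℝ := fun i => if i = L then 1 else -1 with hu
    refine ⟨t • vecMulVec o o + (1 - t) • vecMulVec u u, ?_, ?_, ?_⟩
    · exact (psd_smul (psd_vecMulVec o) ht0).add (psd_smul (psd_vecMulVec u) (by linarith))
    · intro i
      simp only [Matrix.add_apply, Matrix.smul_apply, vecMulVec_apply, smul_eq_mul, ho, hu]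
      by_cases h : i = L <;> simp [h] <;> ring
    · have how : o ⬝ᵥ w = 2 ^ q - 1 := by
        simp only [dotProduct, ho, one_mul]; exact hsum
      have h2 : ∑ i ∈ univ.erase L, w i = (∑ i, w i) - w L := by
        rw [← Finset.sum_erase_add univ w (Finset.mem_univ L)]; ring
      have huw : u ⬝ᵥ w = 1 := by
        rw [dotProduct, ← Finset.sum_erase_add _ _ (Finset.mem_univ L)]
        have h1 : ∑ i ∈ univ.erase L, u i * w i = -∑ i ∈ univ.erase L, w i := by
          rw [← Finset.sum_neg_distrib]
          apply Finset.sum_congr rfl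
          intro i hi
          simp [hu, (Finset.mem_erase.mp hi).1]
        have huL : u L = 1 := by simp [hu]
        rw [h1, huL, h2, one_mul, hsum, hwL]
        linarith
      rw [add_mulVec, smul_mulVec, smul_mulVec, dotProduct_add,
        dotProduct_smul, dotProduct_smul, dot_vecMulVec, dot_vecMulVec, how, huw,
        smul_eq_mul, smul_eq_mul]
      rw [hM] at htM
      clear_value t
      linear_combination -htM
end
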